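/- Let f : H → ℝ be convex and differentiable with L-Lipschitz gradient, L > 0. Then ∇f is (1/L)-cocoercive: ⟨x − y, ∇f(x) − ∇f(y)⟩ ≥ (1/L)‖∇f(x) − ∇f(y)‖² for all x, y (Baillon–Haddad). -/

import Mathlib

open scoped RealInnerProductSpace

section aux

variable {H : Type*} [NormedAddCommGroup H] [InnerProductSpace ℝ H] [CompleteSpace H]

private lemma bh_hasDerivAt {f : H → ℝ} {g : H → H}
    (hgrad : ∀ x, HasGradientAt f (g x) x) (a b : H) (t : ℝ) :
    HasDerivAt (fun s : ℝ => f (a + s • (b - a))) ⟪g (a + t • (b - a)), b - a⟫ t := by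
  have hψ : HasDerivAt (fun s : ℝ => a + s • (b - a)) (b - a) t := by
    simpa using ((hasDerivAt_id t).smul_const (b - a)).const_add a
  have hf := (hgrad (a + t • (b - a))).hasFDerivAt
  have := hf.comp_hasDerivAt t hψ
  simp at this
  exact this

/-- Descent lemma: quadratic upper bound. -/
private lemma bh_descent {f : H → ℝ} {g : H → H} {L : ℝ} (hL : 0 < L)
    (hgrad : ∀ x, HasGradientAt f (g x) x)
    (hlip : ∀ x y : H, ‖g x - g y‖ ≤ L * ‖x - y‖) (a b : H) :
    f b ≤ f a + ⟪g a, b - a⟫ + L / 2 * ‖b - a‖ ^ 2 := by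
  have hgc : Continuous g := by
    have : LipschitzWith L.toNNReal g := by
      apply LipschitzWith.of_dist_le_mul
      intro x y
      rw [dist_eq_norm, dist_eq_norm, Real.coe_toNNReal L hL.le]
      exact hlip x y
    exact this.continuous
  set φ' : ℝ → ℝ := fun t => ⟪g (a + t • (b - a)), b - a⟫ with hφ'
  have hφ'c : Continuous φ' := by
    apply Continuous.inner
    · exact hgc.comp (by continuity)
    · exact continuous_const
  have hint : IntervalIntegrable φ' MeasureTheory.volume 0 1 :=
    hφ'c.intervalIntegrable 0 1
  have heq : ∫ t in (0:ℝ)..1, φ' t = f (a + (1:ℝ) • (b - a)) - f (a + (0:ℝ) • (b - a)) :=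
    intervalIntegral.integral_eq_sub_of_hasDerivAt
      (fun t _ => bh_hasDerivAt hgrad a b t) hint
  have heq' : ∫ t in (0:ℝ)..1, φ' t = f b - f a := by
    rw [heq]; norm_num
  have hbound : ∀ t ∈ Set.Icc (0:ℝ) 1, φ' t ≤ ⟪g a, b - a⟫ + L * ‖b - a‖ ^ 2 * t := by
    intro t ht
    have h1 : φ' t - ⟪g a, b - a⟫ = ⟪g (a + t • (b - a)) - g a, b - a⟫ := by
      rw [hφ', inner_sub_left]
    have h2 : ⟪g (a + t • (b - a)) - g a, b - a⟫ ≤ ‖g (a + t • (b - a)) - g a‖ * ‖b - a‖ :=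
      real_inner_le_norm _ _
    have h3 : ‖g (a + t • (b - a)) - g a‖ ≤ L * (t * ‖b - a‖) := by
      have := hlip (a + t • (b - a)) a
      simpa [norm_smul, Real.norm_of_nonneg ht.1] using this
    nlinarith [norm_nonneg (b - a), mul_nonneg ht.1 (norm_nonneg (b - a))]
  have hmono : ∫ t in (0:ℝ)..1, φ' t ≤
      ∫ t in (0:ℝ)..1, (⟪g a, b - a⟫ + L * ‖b - a‖ ^ 2 * t) := by
    apply intervalIntegral.integral_mono_on zero_le_one hint
    · exact (Continuous.intervalIntegrable (by continuity) 0 1)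
    · exact hbound
  have hrhs : ∫ t in (0:ℝ)..1, (⟪g a, b - a⟫ + L * ‖b - a‖ ^ 2 * t)
      = ⟪g a, b - a⟫ + L / 2 * ‖b - a‖ ^ 2 := by
    rw [intervalIntegral.integral_add (intervalIntegrable_const)
      ((by fun_prop : Continuous fun t : ℝ => L * ‖b - a‖ ^ 2 * t).intervalIntegrable 0 1)]
    rw [intervalIntegral.integral_const]
    rw [intervalIntegral.integral_const_mul, integral_id]
    simp only [smul_eq_mul]
    ring
  rw [heq'] at hmono
  rw [hrhs] at hmono
  linarith

/-- Gradient inequality for convex functions. -/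
private lemma bh_grad_ineq {f : H → ℝ} {g : H → H}
    (hconv : ConvexOn ℝ Set.univ f)
    (hgrad : ∀ x, HasGradientAt f (g x) x) (a b : H) :
    f a + ⟪g a, b - a⟫ ≤ f b := by
  set φ : ℝ → ℝ := fun s => f (a + s • (b - a)) with hφ
  have hφconv : ConvexOn ℝ Set.univ φ := by
    have haff : ConvexOn ℝ ((fun s : ℝ => a + s • (b - a)) ⁻¹' Set.univ)
        (f ∘ (AffineMap.lineMap a b : ℝ →ᵃ[ℝ] H)) :=
      hconv.comp_affineMap _
    have : ∀ s : ℝ, (AffineMap.lineMap a b : ℝ →ᵃ[ℝ] H) s = a + s • (b - a) := by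
      intro s; simp [AffineMap.lineMap_apply]; abel
    have hpre : ((fun s : ℝ => a + s • (b - a)) ⁻¹' Set.univ) = Set.univ := by simp
    rw [hpre] at haff
    exact haff.congr (fun s _ => by simp only [Function.comp_apply, hφ, this s])
  have hd : HasDerivAt φ ⟪g a, b - a⟫ 0 := by
    have := bh_hasDerivAt hgrad a b 0
    simpa using this
  have hslope := hφconv.le_slope_of_hasDerivAt (Set.mem_univ 0) (Set.mem_univ 1)
    zero_lt_one hd
  have : slope φ 0 1 = f b - f a := by
    rw [slope_def_field]
    simp [hφ]
  rw [this] at hslope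
  linarith

/-- Strengthened gradient inequality under Lipschitz gradient. -/
private lemma bh_key {f : H → ℝ} {g : H → H} {L : ℝ} (hL : 0 < L)
    (hconv : ConvexOn ℝ Set.univ f)
    (hgrad : ∀ x, HasGradientAt f (g x) x)
    (hlip : ∀ x y : H, ‖g x - g y‖ ≤ L * ‖x - y‖) (a b : H) :
    f a + ⟪g a, b - a⟫ + 1 / (2 * L) * ‖g b - g a‖ ^ 2 ≤ f b := by
  set z : H := b - (1 / L) • (g b - g a) with hz
  have h1 : f a + ⟪g a, z - a⟫ ≤ f z := bh_grad_ineq hconv hgrad a z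
  have h2 : f z ≤ f b + ⟪g b, z - b⟫ + L / 2 * ‖z - b‖ ^ 2 :=
    bh_descent hL hgrad hlip b z
  have hzb : z - b = -((1 / L) • (g b - g a)) := by rw [hz]; abel
  have hza : z - a = (b - a) - (1 / L) • (g b - g a) := by rw [hz]; abel
  have e1 : ⟪g b, z - b⟫ = -(1 / L) * ⟪g b, g b - g a⟫ := by
    rw [hzb, inner_neg_right, real_inner_smul_right]; ring
  have e2 : ‖z - b‖ ^ 2 = (1 / L) ^ 2 * ‖g b - g a‖ ^ 2 := by
    rw [hzb, norm_neg, norm_smul]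
    rw [Real.norm_of_nonneg (by positivity : (0:ℝ) ≤ 1 / L)]
    ring
  have e3 : ⟪g a, z - a⟫ = ⟪g a, b - a⟫ - (1 / L) * ⟪g a, g b - g a⟫ := by
    rw [hza, inner_sub_right, real_inner_smul_right]
  have e4 : ⟪g b, g b - g a⟫ - ⟪g a, g b - g a⟫ = ‖g b - g a‖ ^ 2 := by
    rw [← inner_sub_left, real_inner_self_eq_norm_sq]
  have hL' : L ≠ 0 := hL.ne'
  rw [e1, e2] at h2
  rw [e3] at h1
  have : f a + ⟪g a, b - a⟫ - (1 / L) * ⟪g a, g b - g a⟫ ≤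
      f b - (1 / L) * ⟪g b, g b - g a⟫ + L / 2 * ((1 / L) ^ 2 * ‖g b - g a‖ ^ 2) := by
    linarith
  have hfield : L / 2 * ((1 / L) ^ 2 * ‖g b - g a‖ ^ 2) = 1 / (2 * L) * ‖g b - g a‖ ^ 2 := by
    field_simp
  rw [hfield] at this
  have hx : (1 / L) * ⟪g b, g b - g a⟫ - (1 / L) * ⟪g a, g b - g a⟫
      = (1 / L) * ‖g b - g a‖ ^ 2 := by linear_combination (1 / L) * e4
  have hcn : (1 / L) * ‖g b - g a‖ ^ 2 = 2 * (1 / (2 * L) * ‖g b - g a‖ ^ 2) := by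
    field_simp
  linarith

end aux

theorem baillon_haddad {H : Type*} [NormedAddCommGroup H] [InnerProductSpace ℝ H]
    [CompleteSpace H] (f : H → ℝ) (g : H → H) (L : ℝ) (hL : 0 < L)
    (hconv : ConvexOn ℝ Set.univ f)
    (hgrad : ∀ x, HasGradientAt f (g x) x)
    (hlip : ∀ x y : H, ‖g x - g y‖ ≤ L * ‖x - y‖) :
    ∀ x y : H, ⟪x - y, g x - g y⟫ ≥ (1 / L) * ‖g x - g y‖ ^ 2 := by
  intro x y
  have h1 := bh_key hL hconv hgrad hlip x y
  have h2 := bh_key hL hconv hgrad hlip y x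
  have e1 : ⟪g x, y - x⟫ + ⟪g y, x - y⟫ = -⟪x - y, g x - g y⟫ := by
    have : ⟪g x, y - x⟫ + ⟪g y, x - y⟫ = ⟪g x - g y, y - x⟫ := by
      rw [inner_sub_left]
      have : ⟪g y, x - y⟫ = -⟪g y, y - x⟫ := by
        rw [← inner_neg_right]; congr 1; abel
      rw [this]; ring
    rw [this, real_inner_comm]
    have : ⟪y - x, g x - g y⟫ = -⟪x - y, g x - g y⟫ := by
      rw [← inner_neg_left]; congr 1; abel
    rw [this]
  have e2 : ‖g x - g y‖ = ‖g y - g x‖ := by rw [← norm_neg]; congr 1; abel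
  have e2' : ‖g y - g x‖ ^ 2 = ‖g x - g y‖ ^ 2 := by rw [e2]
  rw [e2'] at h1
  have hcn : (1 / L) * ‖g x - g y‖ ^ 2 = 2 * (1 / (2 * L) * ‖g x - g y‖ ^ 2) := by
    field_simp
  rw [ge_iff_le]
  linarith
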